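/- arXiv:2401.10884 — 2 statements merged into one kernel-verified Lean document; each statement's English description precedes it below -/
import Mathlib

section
/- Let 1/2 < s ≤ 1, λ₁ > 0 and define c(λ₁) = 2s (λ₁/(2s−1))^{(2s−1)/(2s)}. If 0 < λ₂ < c(λ₁), then for every ξ ∈ ℝ both eigenvalues λ_±(ξ) = |ξ|^{2s} + λ₁ ± λ₂ξ of the matrix Q̂(ξ) = [[λ₁ + |ξ|^{2s}, −iλ₂ξ],[iλ₂ξ, λ₁ + |ξ|^{2s}]] are strictly positive. -/
open Real

/-- If `1/2 < s ≤ 1`, `λ₁ > 0` and `0 < λ₂ < c(λ₁) = 2s(λ₁/(2s-1))^((2s-1)/(2s))`, then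
both eigenvalues `λ_±(ξ) = |ξ|^(2s) + λ₁ ± λ₂ξ` of the Hermitian matrix symbol
`Q̂(ξ)` are strictly positive for every `ξ ∈ ℝ`. -/
theorem eigenvalues_positive (s lam1 lam2 : ℝ) (hs : 1 / 2 < s) (hs1 : s ≤ 1)
    (hlam1 : 0 < lam1) (hlam2 : 0 < lam2)
    (hsub : lam2 < 2 * s * (lam1 / (2 * s - 1)) ^ ((2 * s - 1) / (2 * s))) :
    ∀ ξ : ℝ, 0 < |ξ| ^ (2 * s) + lam1 + lam2 * ξ ∧ 0 < |ξ| ^ (2 * s) + lam1 - lam2 * ξ := by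
  set p := 2 * s with hpdef
  have hp1 : 1 < p := by simp only [hpdef]; linarith
  have hp0 : 0 < p := by linarith
  have hpm1 : 0 < p - 1 := by linarith
  set q := p / (p - 1) with hqdef
  have hpq : p.HolderConjugate q := Real.HolderConjugate.conjExponent hp1
  have hq0 : 0 < q := hpq.symm.pos
  have hmul : p * q = p + q := hpq.mul_eq_add
  have hsum : (p - 1) * q = p := hpq.sub_one_mul_conj
  -- rewrite hsub using p, q
  have hexp : (2 * s - 1) / (2 * s) = 1 / q := by
    rw [hqdef]; field_simp; rw [hpdef]; ring
  rw [hexp] at hsub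
  -- key bound: (p-1) * (lam2/p)^q < lam1
  have hkey : (p - 1) * (lam2 / p) ^ q < lam1 := by
    have h1 : lam2 ^ q < (p * (lam1 / (p - 1)) ^ (1 / q)) ^ q :=
      Real.rpow_lt_rpow hlam2.le hsub hq0
    have hA : (0:ℝ) ≤ lam1 / (p - 1) := le_of_lt (div_pos hlam1 hpm1)
    have h2 : (p * (lam1 / (p - 1)) ^ (1 / q)) ^ q = p ^ q * (lam1 / (p - 1)) := by
      rw [Real.mul_rpow hp0.le (Real.rpow_nonneg hA _), ← Real.rpow_mul hA, one_div,
        inv_mul_cancel₀ hq0.ne', Real.rpow_one]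
    rw [h2] at h1
    have hpow : (lam2 / p) ^ q = lam2 ^ q / p ^ q :=
      Real.div_rpow hlam2.le hp0.le q
    rw [hpow]
    have hP : 0 < p ^ q := Real.rpow_pos_of_pos hp0 q
    have h3 : (p - 1) * (lam2 ^ q / p ^ q) < (p - 1) * (p ^ q * (lam1 / (p - 1)) / p ^ q) := by
      gcongr
    have h4 : (p - 1) * (p ^ q * (lam1 / (p - 1)) / p ^ q) = lam1 := by
      rw [mul_div_cancel_left₀ _ hP.ne', mul_div_cancel₀ _ hpm1.ne']
    linarith
  -- main bound : ∀ x ≥ 0, lam2 * x < x ^ p + lam1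
  have hmain : ∀ x : ℝ, 0 ≤ x → lam2 * x < x ^ p + lam1 := by
    intro x hx
    set t : ℝ := p ^ (1 / p) with htdef
    have ht0 : 0 < t := Real.rpow_pos_of_pos hp0 _
    have htp : t ^ p = p := by
      rw [htdef, ← Real.rpow_mul hp0.le, one_div, inv_mul_cancel₀ hp0.ne', Real.rpow_one]
    have htq : t ^ q = p ^ (q / p) := by
      rw [htdef, ← Real.rpow_mul hp0.le, one_div, inv_mul_eq_div]
    have hyoung := Real.young_inequality_of_nonneg (mul_nonneg ht0.le hx)
      (le_of_lt (div_pos hlam2 ht0)) hpq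
    have e1 : (t * x) ^ p / p = x ^ p := by
      rw [Real.mul_rpow ht0.le hx, htp]
      field_simp
    have hqp1 : q / p + 1 = q := by
      field_simp
      linarith [hmul]
    have hsplit : p ^ q = p ^ (q / p) * p := by
      have h := Real.rpow_add hp0 (q / p) 1
      rw [hqp1, Real.rpow_one] at h
      exact h
    have hPP : 0 < p ^ (q / p) := Real.rpow_pos_of_pos hp0 _
    have e2 : (lam2 / t) ^ q / q = (p - 1) * (lam2 / p) ^ q := by
      rw [Real.div_rpow hlam2.le ht0.le, htq,
        Real.div_rpow hlam2.le hp0.le, hsplit]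
      field_simp
      nlinarith [hsum, mul_pos (Real.rpow_pos_of_pos hlam2 q) hPP]
    have e3 : t * x * (lam2 / t) = lam2 * x := by field_simp
    rw [e1, e2, e3] at hyoung
    linarith
  intro ξ
  have h := hmain |ξ| (abs_nonneg ξ)
  have h1 : lam2 * ξ ≤ lam2 * |ξ| := mul_le_mul_of_nonneg_left (le_abs_self ξ) hlam2.le
  have h2 : -(lam2 * ξ) ≤ lam2 * |ξ| := by
    rw [← mul_neg]
    exact mul_le_mul_of_nonneg_left (neg_le_abs ξ) hlam2.le
  constructor <;> linarith
end

section
/- Under the hypotheses 1/2 < s ≤ 1, λ₁ > 0, 0 < λ₂ < 2s(λ₁/(2s−1))^{(2s−1)/(2s)}, there exist positive constants α₀, α₁, β₀, β₁ such that for all ξ ∈ ℝ: α₀ + α₁|ξ|^{2s} < λ₁ + |ξ|^{2s} ± λ₂ξ < β₀ + β₁|ξ|^{2s}. In particular one may take β₀ = 2λ₁, β₁ = 2. -/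
open Real

lemma symbol_key_bound (s lam1 : ℝ) (hs : 1 / 2 < s) (hlam1 : 0 < lam1)
    {r : ℝ} (hr : 0 ≤ r) :
    2 * s * (lam1 / (2 * s - 1)) ^ ((2 * s - 1) / (2 * s)) * r ≤ lam1 + r ^ (2 * s) := by
  have hs0 : (0:ℝ) < s := lt_trans (by norm_num) hs
  have h2s : (1:ℝ) < 2 * s := by linarith
  have h2s1 : (0:ℝ) < 2 * s - 1 := by linarith
  have hA : (0:ℝ) < lam1 / (2 * s - 1) := div_pos hlam1 h2s1
  set A : ℝ := (lam1 / (2 * s - 1)) ^ ((2 * s - 1) / (2 * s)) with hAdef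
  have hApos : 0 < A := rpow_pos_of_pos hA _
  have hconj : (2 * s).HolderConjugate (2 * s / (2 * s - 1)) := by
    exact Real.HolderConjugate.conjExponent h2s
  have hyoung := Real.young_inequality_of_nonneg hr hApos.le hconj
  have h2s0 : (0:ℝ) < 2 * s := by linarith
  have hAq : A ^ (2 * s / (2 * s - 1)) = lam1 / (2 * s - 1) := by
    rw [hAdef, ← rpow_mul hA.le]
    rw [show (2 * s - 1) / (2 * s) * (2 * s / (2 * s - 1)) = 1 by
      field_simp]
    exact rpow_one _
  rw [hAq] at hyoung
  have hq : lam1 / (2 * s - 1) / (2 * s / (2 * s - 1)) = lam1 / (2 * s) := by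
    field_simp
  rw [hq] at hyoung
  have := mul_le_mul_of_nonneg_left hyoung h2s0.le
  calc 2 * s * A * r = 2 * s * (r * A) := by ring
    _ ≤ 2 * s * (r ^ (2 * s) / (2 * s) + lam1 / (2 * s)) := this
    _ = lam1 + r ^ (2 * s) := by field_simp; ring

/-- Under the subcritical-speed condition there are positive constants
`α₀, α₁, β₀, β₁` with `α₀ + α₁|ξ|^(2s) < λ₁ + |ξ|^(2s) ± λ₂ξ < β₀ + β₁|ξ|^(2s)` for all
`ξ`; in particular one may take `β₀ = 2λ₁`, `β₁ = 2`. -/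
theorem symbol_two_sided_bounds (s lam1 lam2 : ℝ) (hs : 1 / 2 < s) (hs1 : s ≤ 1)
    (hlam1 : 0 < lam1) (hlam2 : 0 < lam2)
    (hsub : lam2 < 2 * s * (lam1 / (2 * s - 1)) ^ ((2 * s - 1) / (2 * s))) :
    (∃ α₀ α₁ β₀ β₁ : ℝ, 0 < α₀ ∧ 0 < α₁ ∧ 0 < β₀ ∧ 0 < β₁ ∧
      ∀ ξ : ℝ,
        (α₀ + α₁ * |ξ| ^ (2 * s) < lam1 + |ξ| ^ (2 * s) + lam2 * ξ ∧
          lam1 + |ξ| ^ (2 * s) + lam2 * ξ < β₀ + β₁ * |ξ| ^ (2 * s)) ∧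
        (α₀ + α₁ * |ξ| ^ (2 * s) < lam1 + |ξ| ^ (2 * s) - lam2 * ξ ∧
          lam1 + |ξ| ^ (2 * s) - lam2 * ξ < β₀ + β₁ * |ξ| ^ (2 * s))) ∧
    (∀ ξ : ℝ,
      lam1 + |ξ| ^ (2 * s) + lam2 * ξ < 2 * lam1 + 2 * |ξ| ^ (2 * s) ∧
      lam1 + |ξ| ^ (2 * s) - lam2 * ξ < 2 * lam1 + 2 * |ξ| ^ (2 * s)) := by
  set L : ℝ := 2 * s * (lam1 / (2 * s - 1)) ^ ((2 * s - 1) / (2 * s)) with hL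
  have hLpos : 0 < L := lt_trans hlam2 hsub
  set ε : ℝ := lam2 / L with hε
  have hε0 : 0 < ε := div_pos hlam2 hLpos
  have hε1 : ε < 1 := (div_lt_one hLpos).mpr hsub
  -- main pointwise bound: lam2 * |ξ| ≤ ε * (lam1 + |ξ|^(2s))
  have hmain : ∀ ξ : ℝ, lam2 * |ξ| ≤ ε * (lam1 + |ξ| ^ (2 * s)) := by
    intro ξ
    have hkey := symbol_key_bound s lam1 hs hlam1 (abs_nonneg ξ)
    have : lam2 * |ξ| = ε * (L * |ξ|) := by
      rw [hε, div_mul_eq_mul_div, eq_div_iff hLpos.ne']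
      ring
    rw [this]
    exact mul_le_mul_of_nonneg_left hkey hε0.le
  have hpow : ∀ ξ : ℝ, (0:ℝ) ≤ |ξ| ^ (2 * s) := fun ξ => rpow_nonneg (abs_nonneg ξ) _
  have habs : ∀ ξ : ℝ, lam2 * ξ ≤ lam2 * |ξ| ∧ -(lam2 * |ξ|) ≤ lam2 * ξ := by
    intro ξ
    constructor
    · exact mul_le_mul_of_nonneg_left (le_abs_self ξ) hlam2.le
    · rw [← mul_neg]
      exact mul_le_mul_of_nonneg_left (neg_abs_le ξ) hlam2.le
  have hupper : ∀ ξ : ℝ,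
      lam1 + |ξ| ^ (2 * s) + lam2 * ξ < 2 * lam1 + 2 * |ξ| ^ (2 * s) ∧
      lam1 + |ξ| ^ (2 * s) - lam2 * ξ < 2 * lam1 + 2 * |ξ| ^ (2 * s) := by
    intro ξ
    have h1 := (habs ξ).1
    have h2 := (habs ξ).2
    have h3 := hmain ξ
    have h4 : ε * (lam1 + |ξ| ^ (2 * s)) < lam1 + |ξ| ^ (2 * s) := by
      have := hpow ξ
      nlinarith
    constructor <;> nlinarith
  refine ⟨⟨(1 - ε) * lam1 / 2, 1 - ε, 2 * lam1, 2, by nlinarith, by linarith,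
    by linarith, by norm_num, ?_⟩, hupper⟩
  intro ξ
  have h1 := (habs ξ).1
  have h2 := (habs ξ).2
  have h3 := hmain ξ
  have h4 := hpow ξ
  have hlow : (1 - ε) * lam1 / 2 + (1 - ε) * |ξ| ^ (2 * s) <
      lam1 + |ξ| ^ (2 * s) - lam2 * |ξ| := by nlinarith
  exact ⟨⟨by nlinarith, (hupper ξ).1⟩, ⟨by nlinarith, (hupper ξ).2⟩⟩
end
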